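/- arXiv:1809.05074 — 2 statements merged into one kernel-verified Lean document; each statement's English description precedes it below -/
import Mathlib

section
/- Let N, p be positive integers with p ≤ N, let Ψ be a real N×p matrix of full column rank, let R be a real symmetric positive definite N×N matrix, and let y ∈ ℝ^N. Define the weighted least squares estimate π̂_WLS = (ΨᵀR⁻¹Ψ)⁻¹ΨᵀR⁻¹y, and for g > 0 define L_SPK(g) = log det(g·ΨΨᵀ + R) + yᵀ(g·ΨΨᵀ + R)⁻¹y and L̂_SP = log det(R) + (y − Ψπ̂_WLS)ᵀR⁻¹(y − Ψπ̂_WLS). Then lim_{g→∞} [ L_SPK(g) − L̂_SP − p·log g ] = log det(ΨᵀR⁻¹Ψ). -/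
open Matrix Filter Topology

/-- Proposition 1(ii): the difference between the SPK negative marginal log-likelihood
and the profile SP negative marginal log-likelihood, minus `p·log g`, tends to
`log det (ΨᵀR⁻¹Ψ)` as the prior variance `g = γ²` tends to infinity. -/
theorem spk_sp_loglik_difference
    (N p : ℕ) (hN : 0 < N) (hp : 0 < p) (hpN : p ≤ N)
    (Ψ : Matrix (Fin N) (Fin p) ℝ) (hΨ : Ψ.rank = p)
    (R : Matrix (Fin N) (Fin N) ℝ) (hR : R.PosDef)
    (y : Fin N → ℝ)
    (πWLS : Fin p → ℝ)
    (hπ : πWLS = ((Ψᵀ * R⁻¹ * Ψ)⁻¹ * (Ψᵀ * R⁻¹)).mulVec y)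
    (LSPK : ℝ → ℝ)
    (hLSPK : ∀ g : ℝ, LSPK g =
      Real.log ((g • (Ψ * Ψᵀ) + R).det)
        + y ⬝ᵥ ((g • (Ψ * Ψᵀ) + R)⁻¹).mulVec y)
    (LSP : ℝ)
    (hLSP : LSP = Real.log R.det
        + (y - Ψ.mulVec πWLS) ⬝ᵥ (R⁻¹).mulVec (y - Ψ.mulVec πWLS)) :
    Tendsto (fun g : ℝ => LSPK g - LSP - p * Real.log g) atTop
      (𝓝 (Real.log ((Ψᵀ * R⁻¹ * Ψ).det))) := by
  classical
  have hRdetpos : 0 < R.det := hR.det_pos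
  have hRdetu : IsUnit R.det := isUnit_iff_ne_zero.mpr hRdetpos.ne'
  have hRinvPD : (R⁻¹).PosDef := hR.inv
  have hRinvT : (R⁻¹)ᵀ = R⁻¹ := by
    have h := hRinvPD.isHermitian
    rwa [Matrix.IsHermitian, conjTranspose_eq_transpose_of_trivial] at h
  set M : Matrix (Fin p) (Fin p) ℝ := Ψᵀ * R⁻¹ * Ψ with hMdef
  -- injectivity of `Ψ.mulVec`
  have hinj : ∀ x : Fin p → ℝ, Ψ.mulVec x = 0 → x = 0 := by
    intro x hx
    have hker : LinearMap.ker Ψ.mulVecLin = ⊥ := by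
      have hrn := Ψ.mulVecLin.finrank_range_add_finrank_ker
      have hfr : Module.finrank ℝ (Fin p → ℝ) = p := by simp
      have hrank : Module.finrank ℝ (LinearMap.range Ψ.mulVecLin) = p := hΨ
      rw [hfr, hrank] at hrn
      have h0 : Module.finrank ℝ (LinearMap.ker Ψ.mulVecLin) = 0 := by omega
      exact Submodule.finrank_eq_zero.mp h0
    have hinj' : Function.Injective Ψ.mulVecLin := LinearMap.ker_eq_bot.mp hker
    apply hinj'
    simpa [Matrix.mulVecLin_apply] using hx
  -- `M` is positive definite
  have hMPD : M.PosDef := by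
    refine Matrix.PosDef.of_dotProduct_mulVec_pos ?_ ?_
    · show Mᴴ = M
      rw [conjTranspose_eq_transpose_of_trivial]
      simp [hMdef, Matrix.transpose_mul, hRinvT, Matrix.mul_assoc]
    · intro x hx
      have hx' : Ψ.mulVec x ≠ 0 := fun h => hx (hinj x h)
      have h := hRinvPD.dotProduct_mulVec_pos hx'
      have e1 : M *ᵥ x = Ψᵀ *ᵥ (R⁻¹ *ᵥ (Ψ *ᵥ x)) := by
        rw [Matrix.mulVec_mulVec, Matrix.mulVec_mulVec, hMdef]
      rw [e1, star_trivial, Matrix.dotProduct_mulVec, Matrix.vecMul_transpose]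
      simpa using h
  have hMT : Mᵀ = M := by
    have h := hMPD.isHermitian
    rwa [Matrix.IsHermitian, conjTranspose_eq_transpose_of_trivial] at h
  have hMdetpos : 0 < M.det := hMPD.det_pos
  have hMdetu : IsUnit M.det := isUnit_iff_ne_zero.mpr hMdetpos.ne'
  have hMinvT : (M⁻¹)ᵀ = M⁻¹ := by rw [Matrix.transpose_nonsing_inv, hMT]
  -- the shifted matrices `t • 1 + M`
  have hSmPD : ∀ t : ℝ, 0 ≤ t →
      (t • (1 : Matrix (Fin p) (Fin p) ℝ) + M).PosDef := by
    intro t ht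
    refine Matrix.PosDef.posSemidef_add ?_ hMPD
    rw [Matrix.smul_one_eq_diagonal]
    exact Matrix.PosSemidef.diagonal fun i => ht
  have hSmdet : ∀ t : ℝ, 0 ≤ t →
      0 < (t • (1 : Matrix (Fin p) (Fin p) ℝ) + M).det := fun t ht =>
    (hSmPD t ht).det_pos
  have hSm0 : (0:ℝ) • (1 : Matrix (Fin p) (Fin p) ℝ) + M = M := by simp
  -- Woodbury identity
  have hW : ∀ g : ℝ, 0 < g → (g • (Ψ * Ψᵀ) + R)⁻¹ =
      R⁻¹ - R⁻¹ * Ψ * (g⁻¹ • (1 : Matrix (Fin p) (Fin p) ℝ) + M)⁻¹ * Ψᵀ * R⁻¹ := by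
    intro g hg
    have hinvsmul : (g • (1 : Matrix (Fin p) (Fin p) ℝ))⁻¹ = g⁻¹ • 1 := by
      apply Matrix.inv_eq_right_inv
      rw [Matrix.smul_mul, Matrix.one_mul, smul_smul, mul_inv_cancel₀ hg.ne', one_smul]
    have hgu : IsUnit (g • (1 : Matrix (Fin p) (Fin p) ℝ)) := by
      have : (g • (1 : Matrix (Fin p) (Fin p) ℝ)).PosDef := by
        rw [Matrix.smul_one_eq_diagonal]
        exact Matrix.PosDef.diagonal fun i => hg
      exact this.isUnit
    have hAC : IsUnit ((g • (1 : Matrix (Fin p) (Fin p) ℝ))⁻¹ + Ψᵀ * R⁻¹ * Ψ) := by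
      rw [hinvsmul, ← hMdef]
      exact (hSmPD g⁻¹ (inv_nonneg.mpr hg.le)).isUnit
    have heq : g • (Ψ * Ψᵀ) + R = R + Ψ * (g • (1 : Matrix (Fin p) (Fin p) ℝ)) * Ψᵀ := by
      simp [Matrix.mul_smul, Matrix.smul_mul, add_comm]
    rw [heq, Matrix.add_mul_mul_inv_eq_sub R Ψ _ Ψᵀ hR.isUnit hgu hAC, hinvsmul, ← hMdef]
  -- determinant identity
  have hdet : ∀ g : ℝ, 0 < g → (g • (Ψ * Ψᵀ) + R).det =
      R.det * (g ^ p * (g⁻¹ • (1 : Matrix (Fin p) (Fin p) ℝ) + M).det) := by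
    intro g hg
    have h1 : R * (1 + g • (R⁻¹ * Ψ) * Ψᵀ) = g • (Ψ * Ψᵀ) + R := by
      rw [Matrix.mul_add, Matrix.mul_one, Matrix.smul_mul, Matrix.mul_smul]
      rw [show R * (R⁻¹ * Ψ * Ψᵀ) = Ψ * Ψᵀ by
        rw [Matrix.mul_assoc R⁻¹, ← Matrix.mul_assoc R, Matrix.mul_nonsing_inv _ hRdetu,
          Matrix.one_mul]]
      rw [add_comm]
    have h2 : (1 : Matrix (Fin p) (Fin p) ℝ) + Ψᵀ * (g • (R⁻¹ * Ψ)) =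
        g • (g⁻¹ • (1 : Matrix (Fin p) (Fin p) ℝ) + M) := by
      rw [Matrix.mul_smul, ← Matrix.mul_assoc, ← hMdef, smul_add, smul_smul,
        mul_inv_cancel₀ hg.ne', one_smul]
    rw [← h1, Matrix.det_mul, Matrix.det_one_add_mul_comm, h2, Matrix.det_smul,
      Fintype.card_fin]
  -- log of the determinant
  have hlog : ∀ g : ℝ, 0 < g → Real.log ((g • (Ψ * Ψᵀ) + R).det) =
      Real.log R.det + ((p : ℝ) * Real.log g
        + Real.log ((g⁻¹ • (1 : Matrix (Fin p) (Fin p) ℝ) + M).det)) := by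
    intro g hg
    have hd : 0 < (g⁻¹ • (1 : Matrix (Fin p) (Fin p) ℝ) + M).det :=
      hSmdet g⁻¹ (inv_nonneg.mpr hg.le)
    rw [hdet g hg, Real.log_mul hRdetpos.ne'
        (mul_ne_zero (pow_ne_zero _ hg.ne') hd.ne'),
      Real.log_mul (pow_ne_zero _ hg.ne') hd.ne', Real.log_pow]
  -- the residual quadratic form
  set P : Matrix (Fin N) (Fin N) ℝ := Ψ * (M⁻¹ * (Ψᵀ * R⁻¹)) with hPdef
  set c : ℝ := (y - Ψ.mulVec πWLS) ⬝ᵥ (R⁻¹).mulVec (y - Ψ.mulVec πWLS) with hcdef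
  have hPT : Pᵀ = R⁻¹ * Ψ * M⁻¹ * Ψᵀ := by
    simp [hPdef, Matrix.transpose_mul, hRinvT, hMinvT, Matrix.mul_assoc]
  have contract : ∀ X : Matrix (Fin p) (Fin N) ℝ,
      M⁻¹ * (Ψᵀ * (R⁻¹ * (Ψ * (M⁻¹ * X)))) = M⁻¹ * X := by
    intro X
    have h1 : M⁻¹ * (M * (M⁻¹ * X)) = M⁻¹ * X := by
      rw [← Matrix.mul_assoc M⁻¹ M, Matrix.nonsing_inv_mul _ hMdetu, Matrix.one_mul]
    calc M⁻¹ * (Ψᵀ * (R⁻¹ * (Ψ * (M⁻¹ * X))))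
        = M⁻¹ * (M * (M⁻¹ * X)) := by simp only [hMdef, Matrix.mul_assoc]
      _ = M⁻¹ * X := h1
  have hkey : (1 - P)ᵀ * (R⁻¹ * (1 - P)) =
      R⁻¹ - R⁻¹ * Ψ * M⁻¹ * Ψᵀ * R⁻¹ := by
    have ha : R⁻¹ * P = R⁻¹ * Ψ * M⁻¹ * Ψᵀ * R⁻¹ := by
      simp only [hPdef, Matrix.mul_assoc]
    have hb : Pᵀ * R⁻¹ = R⁻¹ * Ψ * M⁻¹ * Ψᵀ * R⁻¹ := by rw [hPT]
    have hd : Pᵀ * (R⁻¹ * P) = R⁻¹ * Ψ * M⁻¹ * Ψᵀ * R⁻¹ := by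
      rw [hPT]
      calc R⁻¹ * Ψ * M⁻¹ * Ψᵀ * (R⁻¹ * P)
          = R⁻¹ * (Ψ * (M⁻¹ * (Ψᵀ * (R⁻¹ * (Ψ * (M⁻¹ * (Ψᵀ * R⁻¹))))))) := by
            simp only [hPdef, Matrix.mul_assoc]
        _ = R⁻¹ * (Ψ * (M⁻¹ * (Ψᵀ * R⁻¹))) := by rw [contract]
        _ = R⁻¹ * Ψ * M⁻¹ * Ψᵀ * R⁻¹ := by simp only [Matrix.mul_assoc]
    have expand : (1 - P)ᵀ * (R⁻¹ * (1 - P)) =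
        R⁻¹ - R⁻¹ * P - (Pᵀ * R⁻¹ - Pᵀ * (R⁻¹ * P)) := by
      rw [Matrix.transpose_sub, Matrix.transpose_one, Matrix.mul_sub, Matrix.mul_one,
        Matrix.sub_mul, Matrix.one_mul, Matrix.mul_sub]
    rw [expand, hd, hb, ha]
    abel
  have hc : c = y ⬝ᵥ ((R⁻¹ - R⁻¹ * Ψ * M⁻¹ * Ψᵀ * R⁻¹) *ᵥ y) := by
    have hres : y - Ψ.mulVec πWLS = (1 - P) *ᵥ y := by
      rw [hπ, Matrix.mulVec_mulVec, ← hPdef]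
      · rw [Matrix.sub_mulVec, Matrix.one_mulVec]
    rw [hcdef, hres, Matrix.mulVec_mulVec, ← Matrix.vecMul_transpose,
      Matrix.dotProduct_mulVec, Matrix.vecMul_vecMul, ← Matrix.dotProduct_mulVec, hkey]
  -- continuity of the limiting expression
  have hS : Continuous (fun t : ℝ => t • (1 : Matrix (Fin p) (Fin p) ℝ) + M) :=
    (continuous_id.smul continuous_const).add continuous_const
  have hcont : ContinuousAt (fun t : ℝ =>
      Real.log ((t • (1 : Matrix (Fin p) (Fin p) ℝ) + M).det)
        + y ⬝ᵥ ((R⁻¹ - R⁻¹ * Ψ * (t • (1 : Matrix (Fin p) (Fin p) ℝ) + M)⁻¹ * Ψᵀ * R⁻¹)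
          *ᵥ y)) 0 := by
    have h1 : ContinuousAt (fun t : ℝ =>
        Real.log ((t • (1 : Matrix (Fin p) (Fin p) ℝ) + M).det)) 0 := by
      refine ContinuousAt.comp (Real.continuousAt_log ?_) hS.matrix_det.continuousAt
      rw [hSm0]
      exact hMdetpos.ne'
    have hinv : ContinuousAt (fun t : ℝ =>
        (t • (1 : Matrix (Fin p) (Fin p) ℝ) + M)⁻¹) 0 := by
      have hd : ContinuousAt Ring.inverse
          (((0:ℝ) • (1 : Matrix (Fin p) (Fin p) ℝ) + M).det) := by
        rw [Ring.inverse_eq_inv', hSm0]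
        exact continuousAt_inv₀ hMdetpos.ne'
      exact ContinuousAt.comp (x := (0:ℝ)) (continuousAt_matrix_inv _ hd) hS.continuousAt
    have hF : Continuous (fun A : Matrix (Fin p) (Fin p) ℝ =>
        y ⬝ᵥ ((R⁻¹ - R⁻¹ * Ψ * A * Ψᵀ * R⁻¹) *ᵥ y)) :=
      continuous_const.dotProduct
        (((continuous_const.sub
          ((((continuous_const.matrix_mul continuous_id).matrix_mul
            continuous_const).matrix_mul continuous_const)))).matrix_mulVec
          continuous_const)
    exact h1.add (hF.continuousAt.comp hinv)
  -- assemble the limit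
  have htend : Tendsto (fun g : ℝ =>
      (Real.log ((g⁻¹ • (1 : Matrix (Fin p) (Fin p) ℝ) + M).det)
        + y ⬝ᵥ ((R⁻¹ - R⁻¹ * Ψ * (g⁻¹ • (1 : Matrix (Fin p) (Fin p) ℝ) + M)⁻¹ * Ψᵀ * R⁻¹)
          *ᵥ y)) - c) atTop (𝓝 ((Real.log (((0:ℝ) • (1 : Matrix (Fin p) (Fin p) ℝ) + M).det)
        + y ⬝ᵥ ((R⁻¹ - R⁻¹ * Ψ * ((0:ℝ) • (1 : Matrix (Fin p) (Fin p) ℝ) + M)⁻¹ * Ψᵀ * R⁻¹)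
          *ᵥ y)) - c)) :=
    ((hcont.tendsto.comp tendsto_inv_atTop_zero).sub_const c)
  have hval : (Real.log (((0:ℝ) • (1 : Matrix (Fin p) (Fin p) ℝ) + M).det)
        + y ⬝ᵥ ((R⁻¹ - R⁻¹ * Ψ * ((0:ℝ) • (1 : Matrix (Fin p) (Fin p) ℝ) + M)⁻¹ * Ψᵀ * R⁻¹)
          *ᵥ y)) - c = Real.log M.det := by
    rw [hSm0, ← hc]
    ring
  rw [← hval]
  refine htend.congr' ?_
  filter_upwards [eventually_gt_atTop (0:ℝ)] with g hg
  rw [hLSPK g, hLSP, hlog g hg, hW g hg]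
  ring
end

section
/- Let N, p be positive integers with p ≤ N, let Ψ be a real N×p matrix of full column rank, let R be a real symmetric positive definite N×N matrix, and let y ∈ ℝ^N. Define π̂_WLS = (ΨᵀR⁻¹Ψ)⁻¹ΨᵀR⁻¹y. Then lim_{g→∞} (g·ΨΨᵀ + R)⁻¹ y = R⁻¹(y − Ψπ̂_WLS). -/
open Matrix Filter Topology

lemma aux_mulVec_injective {N p : ℕ} (Ψ : Matrix (Fin N) (Fin p) ℝ) (hΨ : Ψ.rank = p) :
    Function.Injective Ψ.mulVec := by
  have h1 := Ψ.mulVecLin.finrank_range_add_finrank_ker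
  rw [Matrix.rank] at hΨ
  rw [hΨ, Module.finrank_pi] at h1
  simp only [Fintype.card_fin] at h1
  have hker : Module.finrank ℝ (LinearMap.ker Ψ.mulVecLin) = 0 := by omega
  have : LinearMap.ker Ψ.mulVecLin = ⊥ := Submodule.finrank_eq_zero.mp hker
  have hinj : Function.Injective Ψ.mulVecLin := LinearMap.ker_eq_bot.mp this
  exact hinj

lemma aux_conj_posDef {N p : ℕ} (Ψ : Matrix (Fin N) (Fin p) ℝ)
    (hinj : Function.Injective Ψ.mulVec)
    {B : Matrix (Fin N) (Fin N) ℝ} (hB : B.PosDef) : (Ψᵀ * B * Ψ).PosDef := by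
  rw [posDef_iff_dotProduct_mulVec]
  constructor
  · have hH : Bᵀ = B := by
      have := hB.isHermitian
      rwa [Matrix.IsHermitian, conjTranspose_eq_transpose_of_trivial] at this
    show (Ψᵀ * B * Ψ)ᴴ = _
    rw [conjTranspose_eq_transpose_of_trivial]
    rw [Matrix.transpose_mul, Matrix.transpose_mul, transpose_transpose, hH,
      Matrix.mul_assoc]
  · intro x hx
    have hΨx : Ψ.mulVec x ≠ 0 := by
      intro h
      apply hx
      apply hinj
      rw [h, Matrix.mulVec_zero]
    have := hB.dotProduct_mulVec_pos hΨx
    rw [star_trivial] at this ⊢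
    calc x ⬝ᵥ (Ψᵀ * B * Ψ) *ᵥ x
        = x ⬝ᵥ Ψᵀ *ᵥ ((B * Ψ) *ᵥ x) := by rw [Matrix.mulVec_mulVec, Matrix.mul_assoc]
      _ = (Ψ *ᵥ x) ⬝ᵥ (B * Ψ) *ᵥ x := by
          rw [Matrix.dotProduct_mulVec, Matrix.vecMul_transpose]
      _ = (Ψ *ᵥ x) ⬝ᵥ B *ᵥ (Ψ *ᵥ x) := by rw [Matrix.mulVec_mulVec]
      _ > 0 := this

lemma aux_smul_posSemidef {n : ℕ} {g : ℝ} (hg : 0 ≤ g)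
    {A : Matrix (Fin n) (Fin n) ℝ} (hA : A.PosSemidef) : (g • A).PosSemidef := by
  rw [posSemidef_iff_dotProduct_mulVec]
  constructor
  · show (g • A)ᴴ = _
    rw [Matrix.conjTranspose_smul, hA.1]
    simp
  · intro x
    rw [Matrix.smul_mulVec, dotProduct_smul, smul_eq_mul]
    exact mul_nonneg hg (hA.dotProduct_mulVec_nonneg x)

/-- Proposition 1(i), nonparametric component: as the prior variance `g = γ² → ∞`,
`(gΨΨᵀ + R)⁻¹ y` converges to `R⁻¹(y − Ψπ̂_WLS)`. -/
theorem posterior_weight_tendsto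
    (N p : ℕ) (hN : 0 < N) (hp : 0 < p) (hpN : p ≤ N)
    (Ψ : Matrix (Fin N) (Fin p) ℝ) (hΨ : Ψ.rank = p)
    (R : Matrix (Fin N) (Fin N) ℝ) (hR : R.PosDef)
    (y : Fin N → ℝ)
    (πWLS : Fin p → ℝ)
    (hπWLS : πWLS = ((Ψᵀ * R⁻¹ * Ψ)⁻¹ * (Ψᵀ * R⁻¹)).mulVec y) :
    Tendsto (fun g : ℝ => ((g • (Ψ * Ψᵀ) + R)⁻¹).mulVec y) atTop
      (𝓝 ((R⁻¹).mulVec (y - Ψ.mulVec πWLS))) := by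
  have hinj := aux_mulVec_injective Ψ hΨ
  set M : Matrix (Fin p) (Fin p) ℝ := Ψᵀ * R⁻¹ * Ψ with hM
  have hMpd : M.PosDef := aux_conj_posDef Ψ hinj hR.inv
  -- the continuous "limit" function
  set G : Matrix (Fin p) (Fin p) ℝ → (Fin N → ℝ) :=
    fun X => (R⁻¹ - R⁻¹ * Ψ * X * Ψᵀ * R⁻¹).mulVec y with hG
  have hGcont : Continuous G := by
    apply Continuous.matrix_mulVec _ continuous_const
    exact continuous_const.sub
      (((((continuous_const.matrix_mul continuous_id).matrix_mul continuous_const)).matrix_mul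
        continuous_const))
  -- tendsto of the inner matrix
  have h1 : Tendsto (fun g : ℝ => g⁻¹ • (1 : Matrix (Fin p) (Fin p) ℝ) + M) atTop (𝓝 M) := by
    have h0 : Tendsto (fun g : ℝ => g⁻¹ • (1 : Matrix (Fin p) (Fin p) ℝ)) atTop
        (𝓝 ((0 : ℝ) • (1 : Matrix (Fin p) (Fin p) ℝ))) :=
      Filter.Tendsto.smul_const tendsto_inv_atTop_zero _
    have := h0.add_const M
    simpa using this
  have h2 : ContinuousAt Inv.inv M := by
    apply continuousAt_matrix_inv
    rw [Ring.inverse_eq_inv']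
    exact continuousAt_inv₀ (ne_of_gt hMpd.det_pos)
  have h3 : Tendsto (fun g : ℝ => (g⁻¹ • (1 : Matrix (Fin p) (Fin p) ℝ) + M)⁻¹)
      atTop (𝓝 M⁻¹) := h2.tendsto.comp h1
  have h4 : Tendsto (fun g : ℝ => G ((g⁻¹ • (1 : Matrix (Fin p) (Fin p) ℝ) + M)⁻¹))
      atTop (𝓝 (G M⁻¹)) := (hGcont.tendsto M⁻¹).comp h3
  have hGval : G M⁻¹ = (R⁻¹).mulVec (y - Ψ.mulVec πWLS) := by
    show (R⁻¹ - R⁻¹ * Ψ * M⁻¹ * Ψᵀ * R⁻¹) *ᵥ y = _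
    rw [hπWLS, Matrix.sub_mulVec, Matrix.mulVec_sub]
    congr 1
    simp [Matrix.mulVec_mulVec, Matrix.mul_assoc]
  rw [← hGval]
  apply h4.congr'
  filter_upwards [eventually_gt_atTop (0 : ℝ)] with g hg
  -- Woodbury step
  have hgsmul : g • (Ψ * Ψᵀ) + R = R + Ψ * (g • (1 : Matrix (Fin p) (Fin p) ℝ)) * Ψᵀ := by
    rw [Matrix.mul_smul, Matrix.mul_one, Matrix.smul_mul, add_comm]
  have hCinv : (g • (1 : Matrix (Fin p) (Fin p) ℝ))⁻¹ = g⁻¹ • 1 := by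
    apply Matrix.inv_eq_right_inv
    rw [Matrix.smul_mul, Matrix.mul_smul, Matrix.one_mul, smul_smul,
      mul_inv_cancel₀ hg.ne', one_smul]
  have hCunit : IsUnit (g • (1 : Matrix (Fin p) (Fin p) ℝ)) := by
    rw [Matrix.isUnit_iff_isUnit_det, Matrix.det_smul, Matrix.det_one, mul_one,
      Fintype.card_fin]
    exact (pow_pos hg p).ne'.isUnit
  have hACpd : (g⁻¹ • (1 : Matrix (Fin p) (Fin p) ℝ) + M).PosDef :=
    Matrix.PosDef.posSemidef_add
      (aux_smul_posSemidef (le_of_lt (inv_pos.mpr hg)) Matrix.PosSemidef.one) hMpd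
  have hAC : IsUnit ((g • (1 : Matrix (Fin p) (Fin p) ℝ))⁻¹ + Ψᵀ * R⁻¹ * Ψ) := by
    rw [hCinv, ← hM]
    exact hACpd.isUnit
  have hwood := Matrix.add_mul_mul_inv_eq_sub R Ψ (g • (1 : Matrix (Fin p) (Fin p) ℝ)) Ψᵀ
    hR.isUnit hCunit hAC
  rw [hgsmul, hwood, hCinv, ← hM, hG]
end
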